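/- Every pivot operator v_i (i ∈ ℕ) lies in the (not necessarily unital) associative K-subalgebra A = Alg(v₀, v₁, v₂) of End_K(Λ) generated by v₀, v₁, v₂; moreover the family (v_i)_{i∈ℕ} is linearly independent over K, so the subalgebra A is infinite-dimensional over K. -/

import Mathlib

/-- The Grassmann algebra `Λ(x_i ∣ i ≥ 0)`: the exterior algebra over `K` of the free
`K`-module with basis indexed by `ℕ`. -/
noncomputable abbrev GrassmannAlgebra (K : Type*) [Field K] :=
  ExteriorAlgebra K (ℕ →₀ K)

/-- The `i`-th Grassmann generator `x_i ∈ Λ`. -/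
noncomputable def grassGen (K : Type*) [Field K] (i : ℕ) : GrassmannAlgebra K :=
  ExteriorAlgebra.ι K (Finsupp.single i 1)

/-- The operator of left multiplication by `x_i` on `Λ`. -/
noncomputable def grassMul (K : Type*) [Field K] (i : ℕ) :
    Module.End K (GrassmannAlgebra K) :=
  LinearMap.mulLeft K (grassGen K i)

section Aux
variable {K : Type*} [Field K]

lemma gen_swap (i j : ℕ) :
    grassGen K i * grassGen K j = -(grassGen K j * grassGen K i) :=
  eq_neg_of_add_eq_zero_left (ExteriorAlgebra.ι_add_mul_swap _ _)

lemma gen_sq (i : ℕ) : grassGen K i * grassGen K i = 0 :=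
  ExteriorAlgebra.ι_sq_zero _

lemma gm_apply (i : ℕ) (w : GrassmannAlgebra K) : grassMul K i w = grassGen K i * w := rfl

lemma gm_swap (i j : ℕ) :
    grassMul K i * grassMul K j = -(grassMul K j * grassMul K i) := by
  apply LinearMap.ext; intro w
  simp only [Module.End.mul_apply, LinearMap.neg_apply, gm_apply, ← mul_assoc, gen_swap i j,
    neg_mul]

lemma gm_sq (i : ℕ) : grassMul K i * grassMul K i = 0 := by
  apply LinearMap.ext; intro w
  simp only [Module.End.mul_apply, LinearMap.zero_apply, gm_apply, ← mul_assoc, gen_sq,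
    zero_mul]

lemma exists_adjoin_lt (w : GrassmannAlgebra K) :
    ∃ n, w ∈ Algebra.adjoin K (grassGen K '' {j : ℕ | j < n}) := by
  have mono : ∀ {n n' : ℕ}, n ≤ n' →
      Algebra.adjoin K (grassGen K '' {j : ℕ | j < n}) ≤
        Algebra.adjoin K (grassGen K '' {j : ℕ | j < n'}) := fun h =>
    Algebra.adjoin_mono (Set.image_mono fun j hj => lt_of_lt_of_le hj h)
  induction w using ExteriorAlgebra.induction with
  | algebraMap r => exact ⟨0, algebraMap_mem _ r⟩
  | ι x =>
      induction x using Finsupp.induction with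
      | zero => exact ⟨0, by simp only [map_zero]; exact zero_mem _⟩
      | single_add a b f ha hb ih =>
          obtain ⟨n, hn⟩ := ih
          refine ⟨max n (a + 1), ?_⟩
          rw [map_add]
          refine add_mem ?_ (mono (le_max_left _ _) hn)
          have e : ExteriorAlgebra.ι K (Finsupp.single a b) = b • grassGen K a := by
            rw [grassGen, ← map_smul, Finsupp.smul_single, smul_eq_mul, mul_one]
          rw [e]
          exact Subalgebra.smul_mem _
            (Algebra.subset_adjoin ((Set.mem_image _ _ _).2 ⟨a, by simp [lt_max_iff], rfl⟩)) _
  | mul a b iha ihb =>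
      obtain ⟨n, hn⟩ := iha; obtain ⟨n', hn'⟩ := ihb
      exact ⟨max n n', mul_mem (mono (le_max_left _ _) hn) (mono (le_max_right _ _) hn')⟩
  | add a b iha ihb =>
      obtain ⟨n, hn⟩ := iha; obtain ⟨n', hn'⟩ := ihb
      exact ⟨max n n', add_mem (mono (le_max_left _ _) hn) (mono (le_max_right _ _) hn')⟩

lemma vanish {f g : ℕ → Module.End K (GrassmannAlgebra K)}
    (hrec : ∀ j, f j = g j * f (j + 3))
    (hev : ∀ w, ∃ n, ∀ N, n ≤ N → f N w = 0) :
    ∀ j, f j = 0 := by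
  intro j
  apply LinearMap.ext; intro w
  obtain ⟨n, hn⟩ := hev w
  suffices h : ∀ k j, n ≤ j + 3 * k → f j w = 0 by
    simpa using h n j (by omega)
  intro k
  induction k with
  | zero => exact fun j hj => hn j (by omega)
  | succ k ih =>
      intro j hj
      rw [hrec j]
      simp [Module.End.mul_apply, ih (j + 3) (by omega)]

lemma aug_gen (i : ℕ) : ExteriorAlgebra.algebraMapInv (grassGen K i) = (0 : K) := by
  simp [grassGen, ExteriorAlgebra.algebraMapInv, ExteriorAlgebra.lift_ι_apply]

end Aux

set_option maxHeartbeats 1600000 in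
/-- Every pivot operator `v_i` lies in the (not necessarily unital) associative
`K`-subalgebra `A = Alg(v₀, v₁, v₂)` of `End_K(Λ)` generated by `v₀, v₁, v₂`; moreover
the family `(v_i)` is linearly independent over `K`, so `A` is not finite-dimensional
over `K`.  Here `∂_i` is the contraction characterized by `∂_i x_j + x_j ∂_i = δ_{ij}`,
`∂_i(1)=0`, `∂_i ∂_j + ∂_j ∂_i = 0`, and the pivot operators `v_i` are characterized by
the recursion `v_i = ∂_i + x_i x_{i+1} v_{i+3}` together with the fact that `v_i` kills
the subalgebra generated by the `x_j` with `j < i`. -/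
theorem stmt_19 (K : Type*) [Field K]
    (d v : ℕ → Module.End K (GrassmannAlgebra K))
    (hd : ∀ i j : ℕ, d i * grassMul K j + grassMul K j * d i = if i = j then 1 else 0)
    (hd1 : ∀ i : ℕ, d i (1 : GrassmannAlgebra K) = 0)
    (hdd : ∀ i j : ℕ, d i * d j + d j * d i = 0)
    (hv : ∀ i : ℕ, v i = d i + grassMul K i * grassMul K (i + 1) * v (i + 3))
    (hv0 : ∀ i : ℕ, ∀ w ∈ Algebra.adjoin K (grassGen K '' {j : ℕ | j < i}), v i w = 0) :
    (∀ i : ℕ, v i ∈ NonUnitalAlgebra.adjoin K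
        ({v 0, v 1, v 2} : Set (Module.End K (GrassmannAlgebra K)))) ∧
    LinearIndependent K v ∧
    ¬ Module.Finite K (NonUnitalAlgebra.adjoin K
        ({v 0, v 1, v 2} : Set (Module.End K (GrassmannAlgebra K)))) := by
  -- abbreviations
  have hdm_ne : ∀ i j : ℕ, i ≠ j → d i * grassMul K j = -(grassMul K j * d i) := by
    intro i j hij
    refine eq_neg_of_add_eq_zero_left ?_
    rw [hd i j, if_neg hij]
  have hdm_self : ∀ i : ℕ, d i * grassMul K i = 1 - grassMul K i * d i := by
    intro i
    refine eq_sub_of_add_eq ?_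
    rw [hd i i, if_pos rfl]
  -- kill for large indices
  have hkill : ∀ w : GrassmannAlgebra K, ∃ n, ∀ N, n ≤ N → v N w = 0 := by
    intro w
    obtain ⟨n, hn⟩ := exists_adjoin_lt w
    exact ⟨n, fun N hN => hv0 N w
      (Algebra.adjoin_mono (Set.image_mono fun j hj => lt_of_lt_of_le hj hN) hn)⟩
  -- generic one-step expansion
  have step : ∀ (X : Module.End K (GrassmannAlgebra K)) (J : ℕ),
      d J * X + X * d J = 0 →
      X * (grassMul K J * grassMul K (J + 1)) = grassMul K J * grassMul K (J + 1) * X →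
      v J * X + X * v J
        = grassMul K J * grassMul K (J + 1) * (v (J + 3) * X + X * v (J + 3)) := by
    intro X J h0 hc
    have h0' : d J * X = -(X * d J) := eq_neg_of_add_eq_zero_left h0
    rw [hv J]
    calc (d J + grassMul K J * grassMul K (J + 1) * v (J + 3)) * X
          + X * (d J + grassMul K J * grassMul K (J + 1) * v (J + 3))
        = (d J * X + X * d J)
            + (grassMul K J * grassMul K (J + 1) * (v (J + 3) * X)
              + (X * (grassMul K J * grassMul K (J + 1))) * v (J + 3)) := by noncomm_ring
      _ = grassMul K J * grassMul K (J + 1) * (v (J + 3) * X + X * v (J + 3)) := by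
          rw [h0, hc]; noncomm_ring
  -- generic anticommutation
  have antic : ∀ (X : Module.End K (GrassmannAlgebra K)) (i0 : ℕ),
      (∀ J, i0 < J → d J * X + X * d J = 0) →
      (∀ J, i0 < J →
        X * (grassMul K J * grassMul K (J + 1)) = grassMul K J * grassMul K (J + 1) * X) →
      ∀ j, i0 < j → v j * X + X * v j = 0 := by
    intro X i0 hX1 hX2 j hj
    have main := vanish (K := K)
      (f := fun k => v (i0 + 1 + k) * X + X * v (i0 + 1 + k))
      (g := fun k => grassMul K (i0 + 1 + k) * grassMul K (i0 + 1 + k + 1))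
      (fun k => step X (i0 + 1 + k) (hX1 _ (by omega)) (hX2 _ (by omega)))
      (fun w => by
        obtain ⟨n, hn⟩ := hkill w
        obtain ⟨n', hn'⟩ := hkill (X w)
        refine ⟨max n n', fun N hN => ?_⟩
        simp only [LinearMap.add_apply, Module.End.mul_apply,
          hn (i0 + 1 + N) (by omega), hn' (i0 + 1 + N) (by omega), map_zero, add_zero])
    have := main (j - (i0 + 1))
    simpa only [show i0 + 1 + (j - (i0 + 1)) = j from by omega] using this
  have acvm : ∀ i j : ℕ, i < j → v j * grassMul K i = -(grassMul K i * v j) := by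
    intro i j hij
    refine eq_neg_of_add_eq_zero_left (antic (grassMul K i) i (fun J hJ => ?_) (fun J hJ => ?_) j hij)
    · rw [hd J i, if_neg (by omega)]
    · calc grassMul K i * (grassMul K J * grassMul K (J + 1))
          = (grassMul K i * grassMul K J) * grassMul K (J + 1) := by noncomm_ring
        _ = (-(grassMul K J * grassMul K i)) * grassMul K (J + 1) := by rw [gm_swap i J]
        _ = -(grassMul K J * (grassMul K i * grassMul K (J + 1))) := by apply LinearMap.ext; intro w; simp only [Module.End.mul_apply, Module.End.one_apply, LinearMap.neg_apply, LinearMap.add_apply, LinearMap.sub_apply, LinearMap.zero_apply, map_neg, map_add, map_sub, map_zero, neg_neg] <;> abel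
        _ = -(grassMul K J * (-(grassMul K (J + 1) * grassMul K i))) := by rw [gm_swap i (J+1)]
        _ = grassMul K J * grassMul K (J + 1) * grassMul K i := by apply LinearMap.ext; intro w; simp only [Module.End.mul_apply, Module.End.one_apply, LinearMap.neg_apply, LinearMap.add_apply, LinearMap.sub_apply, LinearMap.zero_apply, map_neg, map_add, map_sub, map_zero, neg_neg] <;> abel
  have acvd : ∀ i j : ℕ, i < j → v j * d i = -(d i * v j) := by
    intro i j hij
    refine eq_neg_of_add_eq_zero_left (antic (d i) i (fun J hJ => hdd J i) (fun J hJ => ?_) j hij)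
    calc d i * (grassMul K J * grassMul K (J + 1))
        = (d i * grassMul K J) * grassMul K (J + 1) := by noncomm_ring
      _ = (-(grassMul K J * d i)) * grassMul K (J + 1) := by rw [hdm_ne i J (by omega)]
      _ = -(grassMul K J * (d i * grassMul K (J + 1))) := by apply LinearMap.ext; intro w; simp only [Module.End.mul_apply, Module.End.one_apply, LinearMap.neg_apply, LinearMap.add_apply, LinearMap.sub_apply, LinearMap.zero_apply, map_neg, map_add, map_sub, map_zero, neg_neg] <;> abel
      _ = -(grassMul K J * (-(grassMul K (J + 1) * d i))) := by rw [hdm_ne i (J+1) (by omega)]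
      _ = grassMul K J * grassMul K (J + 1) * d i := by apply LinearMap.ext; intro w; simp only [Module.End.mul_apply, Module.End.one_apply, LinearMap.neg_apply, LinearMap.add_apply, LinearMap.sub_apply, LinearMap.zero_apply, map_neg, map_add, map_sub, map_zero, neg_neg] <;> abel
  -- d i squared is zero
  have d2m : ∀ i j : ℕ, (d i * d i) * grassMul K j = grassMul K j * (d i * d i) := by
    intro i j
    by_cases h : i = j
    · subst h
      calc (d i * d i) * grassMul K i = d i * (d i * grassMul K i) := by noncomm_ring
        _ = d i * (1 - grassMul K i * d i) := by rw [hdm_self]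
        _ = d i - (d i * grassMul K i) * d i := by apply LinearMap.ext; intro w; simp only [Module.End.mul_apply, Module.End.one_apply, LinearMap.neg_apply, LinearMap.add_apply, LinearMap.sub_apply, LinearMap.zero_apply, map_neg, map_add, map_sub, map_zero, neg_neg] <;> abel
        _ = d i - (1 - grassMul K i * d i) * d i := by rw [hdm_self]
        _ = grassMul K i * (d i * d i) := by apply LinearMap.ext; intro w; simp only [Module.End.mul_apply, Module.End.one_apply, LinearMap.neg_apply, LinearMap.add_apply, LinearMap.sub_apply, LinearMap.zero_apply, map_neg, map_add, map_sub, map_zero, neg_neg] <;> abel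
    · calc (d i * d i) * grassMul K j = d i * (d i * grassMul K j) := by noncomm_ring
        _ = d i * (-(grassMul K j * d i)) := by rw [hdm_ne i j h]
        _ = -((d i * grassMul K j) * d i) := by apply LinearMap.ext; intro w; simp only [Module.End.mul_apply, Module.End.one_apply, LinearMap.neg_apply, LinearMap.add_apply, LinearMap.sub_apply, LinearMap.zero_apply, map_neg, map_add, map_sub, map_zero, neg_neg] <;> abel
        _ = -((-(grassMul K j * d i)) * d i) := by rw [hdm_ne i j h]
        _ = grassMul K j * (d i * d i) := by apply LinearMap.ext; intro w; simp only [Module.End.mul_apply, Module.End.one_apply, LinearMap.neg_apply, LinearMap.add_apply, LinearMap.sub_apply, LinearMap.zero_apply, map_neg, map_add, map_sub, map_zero, neg_neg] <;> abel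
  have d2ml : ∀ (i : ℕ) (x : ℕ →₀ K),
      (d i * d i) * LinearMap.mulLeft K (ExteriorAlgebra.ι K x)
        = LinearMap.mulLeft K (ExteriorAlgebra.ι K x) * (d i * d i) := by
    intro i x
    induction x using Finsupp.induction with
    | zero => rw [map_zero, LinearMap.mulLeft_zero_eq_zero, mul_zero, zero_mul]
    | single_add a b f ha hb ih =>
        have e : LinearMap.mulLeft K (ExteriorAlgebra.ι K (Finsupp.single a b + f))
            = b • grassMul K a + LinearMap.mulLeft K (ExteriorAlgebra.ι K f) := by
          apply LinearMap.ext; intro w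
          have e1 : ExteriorAlgebra.ι K (Finsupp.single a b) = b • grassGen K a := by
            rw [grassGen, ← map_smul, Finsupp.smul_single, smul_eq_mul, mul_one]
          simp only [map_add, e1, LinearMap.mulLeft_apply, LinearMap.add_apply,
            LinearMap.smul_apply, add_mul, smul_mul_assoc, gm_apply]
        rw [e, mul_add, add_mul, ih, mul_smul_comm, smul_mul_assoc, d2m]
  have dsq : ∀ i : ℕ, d i * d i = 0 := by
    intro i
    have hcomm : ∀ w u : GrassmannAlgebra K,
        (d i * d i) (w * u) = w * ((d i * d i) u) := by
      intro w
      induction w using ExteriorAlgebra.induction with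
      | algebraMap r =>
          intro u
          rw [← Algebra.smul_def, map_smul, Algebra.smul_def]
      | ι x =>
          intro u
          simpa only [Module.End.mul_apply, LinearMap.mulLeft_apply] using
            LinearMap.congr_fun (d2ml i x) u
      | mul a b iha ihb =>
          intro u
          rw [mul_assoc, iha, ihb, mul_assoc]
      | add a b iha ihb =>
          intro u
          rw [add_mul, map_add, iha, ihb, ← add_mul]
    apply LinearMap.ext; intro w
    have h1 := hcomm w 1
    rw [mul_one] at h1
    have h2 : (d i * d i) (1 : GrassmannAlgebra K) = 0 := by
      simp only [Module.End.mul_apply, hd1, map_zero]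
    rw [LinearMap.zero_apply, h1, h2, mul_zero]
  -- nilpotency helper
  have hnil : ∀ (i : ℕ) (Y : Module.End K (GrassmannAlgebra K)),
      grassMul K i * grassMul K (i+1) * (grassMul K i * Y) = 0 := by
    intro i Y
    calc grassMul K i * grassMul K (i+1) * (grassMul K i * Y)
        = grassMul K i * ((grassMul K (i+1) * grassMul K i) * Y) := by noncomm_ring
      _ = grassMul K i * ((-(grassMul K i * grassMul K (i+1))) * Y) := by rw [gm_swap (i+1) i]
      _ = -((grassMul K i * grassMul K i) * (grassMul K (i+1) * Y)) := by apply LinearMap.ext; intro w; simp only [Module.End.mul_apply, Module.End.one_apply, LinearMap.neg_apply, LinearMap.add_apply, LinearMap.sub_apply, LinearMap.zero_apply, map_neg, map_add, map_sub, map_zero, neg_neg] <;> abel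
      _ = 0 := by rw [gm_sq]; noncomm_ring
  have vm_self : ∀ i : ℕ, v i * grassMul K i = 1 - grassMul K i * v i := by
    intro i
    have e3 : d i = v i - grassMul K i * grassMul K (i+1) * v (i+3) :=
      eq_sub_of_add_eq (hv i).symm
    calc v i * grassMul K i
        = d i * grassMul K i + grassMul K i * grassMul K (i+1) * (v (i+3) * grassMul K i) := by
          conv_lhs => rw [hv i]
          noncomm_ring
      _ = d i * grassMul K i
          + grassMul K i * grassMul K (i+1) * (-(grassMul K i * v (i+3))) := by
          rw [acvm i (i+3) (by omega)]
      _ = d i * grassMul K i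
          - grassMul K i * grassMul K (i+1) * (grassMul K i * v (i+3)) := by apply LinearMap.ext; intro w; simp only [Module.End.mul_apply, Module.End.one_apply, LinearMap.neg_apply, LinearMap.add_apply, LinearMap.sub_apply, LinearMap.zero_apply, map_neg, map_add, map_sub, map_zero, neg_neg] <;> abel
      _ = d i * grassMul K i := by rw [hnil, sub_zero]
      _ = 1 - grassMul K i * d i := hdm_self i
      _ = 1 - grassMul K i * (v i - grassMul K i * grassMul K (i+1) * v (i+3)) := by rw [← e3]
      _ = (1 - grassMul K i * v i)
          + (grassMul K i * grassMul K i) * (grassMul K (i+1) * v (i+3)) := by apply LinearMap.ext; intro w; simp only [Module.End.mul_apply, Module.End.one_apply, LinearMap.neg_apply, LinearMap.add_apply, LinearMap.sub_apply, LinearMap.zero_apply, map_neg, map_add, map_sub, map_zero, neg_neg] <;> abel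
      _ = 1 - grassMul K i * v i := by rw [gm_sq]; noncomm_ring
  have vsq : ∀ i : ℕ, v i * v i = grassMul K (i+1) * v (i+3) := by
    intro i
    have hdP : d i * (grassMul K i * grassMul K (i+1))
        = grassMul K (i+1) + grassMul K i * grassMul K (i+1) * d i := by
      calc d i * (grassMul K i * grassMul K (i+1))
          = (d i * grassMul K i) * grassMul K (i+1) := by noncomm_ring
        _ = (1 - grassMul K i * d i) * grassMul K (i+1) := by rw [hdm_self i]
        _ = grassMul K (i+1) - grassMul K i * (d i * grassMul K (i+1)) := by apply LinearMap.ext; intro w; simp only [Module.End.mul_apply, Module.End.one_apply, LinearMap.neg_apply, LinearMap.add_apply, LinearMap.sub_apply, LinearMap.zero_apply, map_neg, map_add, map_sub, map_zero, neg_neg] <;> abel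
        _ = grassMul K (i+1) - grassMul K i * (-(grassMul K (i+1) * d i)) := by
            rw [hdm_ne i (i+1) (by omega)]
        _ = grassMul K (i+1) + grassMul K i * grassMul K (i+1) * d i := by apply LinearMap.ext; intro w; simp only [Module.End.mul_apply, Module.End.one_apply, LinearMap.neg_apply, LinearMap.add_apply, LinearMap.sub_apply, LinearMap.zero_apply, map_neg, map_add, map_sub, map_zero, neg_neg] <;> abel
    have hv3P : v (i+3) * (grassMul K i * grassMul K (i+1))
        = grassMul K i * grassMul K (i+1) * v (i+3) := by
      calc v (i+3) * (grassMul K i * grassMul K (i+1))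
          = (v (i+3) * grassMul K i) * grassMul K (i+1) := by noncomm_ring
        _ = (-(grassMul K i * v (i+3))) * grassMul K (i+1) := by rw [acvm i (i+3) (by omega)]
        _ = -(grassMul K i * (v (i+3) * grassMul K (i+1))) := by apply LinearMap.ext; intro w; simp only [Module.End.mul_apply, Module.End.one_apply, LinearMap.neg_apply, LinearMap.add_apply, LinearMap.sub_apply, LinearMap.zero_apply, map_neg, map_add, map_sub, map_zero, neg_neg] <;> abel
        _ = -(grassMul K i * (-(grassMul K (i+1) * v (i+3)))) := by
            rw [acvm (i+1) (i+3) (by omega)]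
        _ = grassMul K i * grassMul K (i+1) * v (i+3) := by apply LinearMap.ext; intro w; simp only [Module.End.mul_apply, Module.End.one_apply, LinearMap.neg_apply, LinearMap.add_apply, LinearMap.sub_apply, LinearMap.zero_apply, map_neg, map_add, map_sub, map_zero, neg_neg] <;> abel
    calc v i * v i
        = d i * d i + (d i * (grassMul K i * grassMul K (i+1))) * v (i+3)
          + grassMul K i * grassMul K (i+1) * (v (i+3) * d i)
          + grassMul K i * grassMul K (i+1)
              * ((v (i+3) * (grassMul K i * grassMul K (i+1))) * v (i+3)) := by
          conv_lhs => rw [hv i]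
          noncomm_ring
      _ = 0 + (grassMul K (i+1) + grassMul K i * grassMul K (i+1) * d i) * v (i+3)
          + grassMul K i * grassMul K (i+1) * (-(d i * v (i+3)))
          + grassMul K i * grassMul K (i+1)
              * ((grassMul K i * grassMul K (i+1) * v (i+3)) * v (i+3)) := by
          rw [dsq i, hdP, acvd i (i+3) (by omega), hv3P]
      _ = grassMul K (i+1) * v (i+3)
          + grassMul K i * grassMul K (i+1)
              * (grassMul K i * (grassMul K (i+1) * v (i+3) * v (i+3))) := by apply LinearMap.ext; intro w; simp only [Module.End.mul_apply, Module.End.one_apply, LinearMap.neg_apply, LinearMap.add_apply, LinearMap.sub_apply, LinearMap.zero_apply, map_neg, map_add, map_sub, map_zero, neg_neg] <;> abel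
      _ = grassMul K (i+1) * v (i+3) := by rw [hnil, add_zero]
  have key : ∀ i : ℕ, v (i+3) = v (i+1) * (v i * v i) - v i * v i * v (i+1) := by
    intro i
    have h0 : d (i+1) * v (i+3) + v (i+3) * d (i+1) = 0 := by
      rw [acvd (i+1) (i+3) (by omega)]; abel
    have hc : v (i+3) * (grassMul K (i+1) * grassMul K (i+2))
        = grassMul K (i+1) * grassMul K (i+2) * v (i+3) := by
      calc v (i+3) * (grassMul K (i+1) * grassMul K (i+2))
          = (v (i+3) * grassMul K (i+1)) * grassMul K (i+2) := by noncomm_ring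
        _ = (-(grassMul K (i+1) * v (i+3))) * grassMul K (i+2) := by
            rw [acvm (i+1) (i+3) (by omega)]
        _ = -(grassMul K (i+1) * (v (i+3) * grassMul K (i+2))) := by apply LinearMap.ext; intro w; simp only [Module.End.mul_apply, Module.End.one_apply, LinearMap.neg_apply, LinearMap.add_apply, LinearMap.sub_apply, LinearMap.zero_apply, map_neg, map_add, map_sub, map_zero, neg_neg] <;> abel
        _ = -(grassMul K (i+1) * (-(grassMul K (i+2) * v (i+3)))) := by
            rw [acvm (i+2) (i+3) (by omega)]
        _ = grassMul K (i+1) * grassMul K (i+2) * v (i+3) := by apply LinearMap.ext; intro w; simp only [Module.End.mul_apply, Module.End.one_apply, LinearMap.neg_apply, LinearMap.add_apply, LinearMap.sub_apply, LinearMap.zero_apply, map_neg, map_add, map_sub, map_zero, neg_neg] <;> abel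
    have hH : v (i+1) * v (i+3) + v (i+3) * v (i+1)
        = grassMul K (i+1) * grassMul K (i+2) * (v (i+4) * v (i+3) + v (i+3) * v (i+4)) :=
      step (v (i+3)) (i+1) h0 hc
    refine Eq.symm ?_
    calc v (i+1) * (v i * v i) - v i * v i * v (i+1)
        = v (i+1) * (grassMul K (i+1) * v (i+3))
          - grassMul K (i+1) * v (i+3) * v (i+1) := by rw [vsq i]
      _ = (v (i+1) * grassMul K (i+1)) * v (i+3)
          - grassMul K (i+1) * (v (i+3) * v (i+1)) := by noncomm_ring
      _ = (1 - grassMul K (i+1) * v (i+1)) * v (i+3)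
          - grassMul K (i+1) * (v (i+3) * v (i+1)) := by rw [vm_self (i+1)]
      _ = v (i+3) - grassMul K (i+1) * (v (i+1) * v (i+3) + v (i+3) * v (i+1)) := by apply LinearMap.ext; intro w; simp only [Module.End.mul_apply, Module.End.one_apply, LinearMap.neg_apply, LinearMap.add_apply, LinearMap.sub_apply, LinearMap.zero_apply, map_neg, map_add, map_sub, map_zero, neg_neg] <;> abel
      _ = v (i+3) - grassMul K (i+1) * (grassMul K (i+1) * grassMul K (i+2)
            * (v (i+4) * v (i+3) + v (i+3) * v (i+4))) := by rw [hH]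
      _ = v (i+3) - (grassMul K (i+1) * grassMul K (i+1))
            * (grassMul K (i+2) * (v (i+4) * v (i+3) + v (i+3) * v (i+4))) := by noncomm_ring
      _ = v (i+3) := by rw [gm_sq]; noncomm_ring
  -- membership
  set S := NonUnitalAlgebra.adjoin K
      ({v 0, v 1, v 2} : Set (Module.End K (GrassmannAlgebra K))) with hS
  have hmem3 : ∀ n : ℕ, v n ∈ S ∧ v (n+1) ∈ S ∧ v (n+2) ∈ S := by
    intro n
    induction n with
    | zero =>
        exact ⟨NonUnitalAlgebra.subset_adjoin K (by simp),
          NonUnitalAlgebra.subset_adjoin K (by simp),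
          NonUnitalAlgebra.subset_adjoin K (by simp)⟩
    | succ n ih =>
        refine ⟨ih.2.1, ih.2.2, ?_⟩
        show v (n+3) ∈ S
        rw [key n]
        exact sub_mem (mul_mem ih.2.1 (mul_mem ih.1 ih.1))
          (mul_mem (mul_mem ih.1 ih.1) ih.2.1)
  have hmem : ∀ i : ℕ, v i ∈ S := fun i => (hmem3 i).1
  -- dual-type computations
  have hd_gen : ∀ j m : ℕ, d j (grassGen K m) = if j = m then 1 else 0 := by
    intro j m
    have h := LinearMap.congr_fun (hd j m) (1 : GrassmannAlgebra K)
    simp only [LinearMap.add_apply, Module.End.mul_apply, hd1, map_zero, gm_apply, mul_one,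
      add_zero] at h
    rw [h]
    by_cases hjm : j = m
    · rw [if_pos hjm, if_pos hjm, Module.End.one_apply]
    · rw [if_neg hjm, if_neg hjm, LinearMap.zero_apply]
  have hvgen_gt : ∀ j m : ℕ, m < j → v j (grassGen K m) = 0 := fun j m h =>
    hv0 j _ (Algebra.subset_adjoin ((Set.mem_image _ _ _).2 ⟨m, h, rfl⟩))
  have hvgen_self : ∀ m : ℕ, v m (grassGen K m) = 1 := by
    intro m
    have h := LinearMap.congr_fun (hv m) (grassGen K m)
    rw [LinearMap.add_apply, Module.End.mul_apply, Module.End.mul_apply,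
      hvgen_gt (m+3) m (by omega), map_zero, map_zero, add_zero, hd_gen, if_pos rfl] at h
    exact h
  have hvgen_lt : ∀ j m : ℕ, j < m →
      ExteriorAlgebra.algebraMapInv (v j (grassGen K m)) = (0:K) := by
    intro j m hjm
    have h := LinearMap.congr_fun (hv j) (grassGen K m)
    rw [LinearMap.add_apply, Module.End.mul_apply, Module.End.mul_apply, hd_gen,
      if_neg (by omega), zero_add] at h
    rw [h, gm_apply, map_mul, aug_gen, zero_mul]
  have hdelta : ∀ j m : ℕ,
      ExteriorAlgebra.algebraMapInv (v j (grassGen K m)) = if j = m then (1:K) else 0 := by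
    intro j m
    rcases lt_trichotomy j m with h|h|h
    · rw [hvgen_lt j m h, if_neg (by omega)]
    · subst h; rw [hvgen_self, map_one, if_pos rfl]
    · rw [hvgen_gt j m h, map_zero, if_neg (by omega)]
  have hLI : LinearIndependent K v := by
    rw [linearIndependent_iff]
    intro l hl
    ext m
    have h2 : (Finsupp.linearCombination K v l) (grassGen K m) = 0 := by
      rw [hl, LinearMap.zero_apply]
    have h3 : ExteriorAlgebra.algebraMapInv
        ((Finsupp.linearCombination K v l) (grassGen K m)) = (0:K) := by
      rw [h2, map_zero]
    rw [Finsupp.linearCombination_apply, Finsupp.sum, LinearMap.sum_apply, map_sum] at h3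
    simp only [LinearMap.smul_apply, map_smul, hdelta, smul_eq_mul, mul_ite, mul_one,
      mul_zero] at h3
    rw [Finset.sum_ite_eq' l.support m (fun j => l j)] at h3
    by_cases hm : m ∈ l.support
    · rw [if_pos hm] at h3
      exact h3
    · exact Finsupp.notMem_support_iff.1 hm
  refine ⟨hmem, hLI, ?_⟩
  intro hfin
  let incl : S →ₗ[K] Module.End K (GrassmannAlgebra K) :=
    { toFun := Subtype.val, map_add' := fun _ _ => rfl, map_smul' := fun _ _ => rfl }
  have hLI' : LinearIndependent K (fun i : ℕ => (⟨v i, hmem i⟩ : S)) := by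
    apply LinearIndependent.of_comp incl
    exact hLI
  haveI : Module.Finite K S := hfin
  have : Finite ℕ := LinearIndependent.finite hLI'
  exact not_finite ℕ
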